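/- Let PM : ℝ^d × ℝ^d → ℝ^{2d} be the Prony mapping, PM(A, X) = (m_0(F_{A,X}), ..., m_{2d−1}(F_{A,X})) with m_k(F_{A,X}) = ∑_{j=1}^d a_j x_j^k. For every 0 < m ≤ M, d ≥ 1, ρ > 0, there exist positive constants C_5, C_6, C_7 depending only on m, M, d, ρ with the following properties at every point (A^0, X^0) with nodes X^0 ⊂ [−1/2, 1/2] pairwise separated by at least ρ and amplitudes satisfying m ≤ |a^0_j| ≤ M: (1) the Jacobian (total derivative) JPM = D PM(A^0, X^0) is an invertible linear map; (2) the operator norm of JPM^{−1} is at most C_5; (3) for every μ ∈ ℝ^{2d}, ‖JPM^{−1}(μ)‖ ≥ C_6 ‖μ‖; and (4) for every μ on the last coordinate axis L = {(0, ..., 0, t) : t ∈ ℝ} ⊂ ℝ^{2d}, the projection P_X of JPM^{−1}(μ) onto the node coordinates X satisfies ‖P_X(JPM^{−1}(μ))‖ ≥ C_7 ‖μ‖. -/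

import Mathlib

/-- The Prony mapping `PM : ℝ^d × ℝ^d → ℝ^{2d}`,
`PM(A, X) = (m_0(F_{A,X}), …, m_{2d−1}(F_{A,X}))` with
`m_k(F_{A,X}) = ∑ j, A j · (X j)^k`.  The domain carries the Euclidean (`L²`)
norm via `WithLp 2`. -/
noncomputable def Prony (d : ℕ)
    (p : WithLp 2 (EuclideanSpace ℝ (Fin d) × EuclideanSpace ℝ (Fin d))) :
    EuclideanSpace ℝ (Fin (2 * d)) :=
  WithLp.toLp 2 (fun k : Fin (2 * d) =>
    ∑ j, (WithLp.equiv 2 _ p).1 j * ((WithLp.equiv 2 _ p).2 j) ^ (k : ℕ))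

open Finset Polynomial

noncomputable section

abbrev PD (d : ℕ) := WithLp 2 (EuclideanSpace ℝ (Fin d) × EuclideanSpace ℝ (Fin d))
abbrev PF (d : ℕ) := EuclideanSpace ℝ (Fin (2 * d))

variable {d : ℕ}

/-- coordinate projection onto amplitude j -/
def coordA (d : ℕ) (j : Fin d) : PD d →L[ℝ] ℝ :=
  (EuclideanSpace.proj j) ∘L (ContinuousLinearMap.fst ℝ _ _) ∘L
    (WithLp.prodContinuousLinearEquiv 2 ℝ (EuclideanSpace ℝ (Fin d)) (EuclideanSpace ℝ (Fin d))).toContinuousLinearMap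

def coordX (d : ℕ) (j : Fin d) : PD d →L[ℝ] ℝ :=
  (EuclideanSpace.proj j) ∘L (ContinuousLinearMap.snd ℝ _ _) ∘L
    (WithLp.prodContinuousLinearEquiv 2 ℝ (EuclideanSpace ℝ (Fin d)) (EuclideanSpace ℝ (Fin d))).toContinuousLinearMap

@[simp] lemma coordA_apply (j : Fin d) (v : PD d) : coordA d j v = v.ofLp.1 j := rfl
@[simp] lemma coordX_apply (j : Fin d) (v : PD d) : coordX d j v = v.ofLp.2 j := rfl

def pronyComp (d : ℕ) (A X : EuclideanSpace ℝ (Fin d)) (k : ℕ) : PD d →L[ℝ] ℝ :=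
  ∑ j, ((X j ^ k) • coordA d j + ((k : ℝ) * A j * X j ^ (k - 1)) • coordX d j)

lemma pronyComp_apply (A X : EuclideanSpace ℝ (Fin d)) (k : ℕ) (v : PD d) :
    pronyComp d A X k v = ∑ j, (v.ofLp.1 j * X j ^ k + (k : ℝ) * A j * X j ^ (k - 1) * v.ofLp.2 j) := by
  simp only [pronyComp, ContinuousLinearMap.sum_apply, ContinuousLinearMap.add_apply,
    ContinuousLinearMap.smul_apply, coordA_apply, coordX_apply, smul_eq_mul]
  exact Finset.sum_congr rfl fun j _ => by ring

def pronyJ (d : ℕ) (A X : EuclideanSpace ℝ (Fin d)) : PD d →L[ℝ] PF d :=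
  ((PiLp.continuousLinearEquiv 2 ℝ (fun _ : Fin (2 * d) => ℝ)).symm : (Fin (2*d) → ℝ) →L[ℝ] PF d) ∘L
    ContinuousLinearMap.pi (fun k : Fin (2 * d) => pronyComp d A X (k : ℕ))

lemma pronyJ_apply (A X : EuclideanSpace ℝ (Fin d)) (v : PD d) (k : Fin (2 * d)) :
    pronyJ d A X v k = ∑ j, (v.ofLp.1 j * X j ^ (k : ℕ) + ((k : ℕ) : ℝ) * A j * X j ^ ((k : ℕ) - 1) * v.ofLp.2 j) := by
  rw [← pronyComp_apply]
  rfl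

lemma hasFDerivAt_prony (A X : EuclideanSpace ℝ (Fin d)) :
    HasFDerivAt (Prony d) (pronyJ d A X) ((WithLp.equiv 2 _).symm (A, X)) := by
  set p₀ : PD d := (WithLp.equiv 2 _).symm (A, X) with hp₀
  have hrw : Prony d = ⇑(PiLp.continuousLinearEquiv 2 ℝ (fun _ : Fin (2 * d) => ℝ)).symm ∘
      (fun (p : PD d) (k : Fin (2 * d)) => ∑ j, p.ofLp.1 j * p.ofLp.2 j ^ (k : ℕ)) := rfl
  rw [hrw, pronyJ]
  rw [ContinuousLinearEquiv.comp_hasFDerivAt_iff]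
  apply hasFDerivAt_pi''
  intro k
  rw [ContinuousLinearMap.proj_pi]
  have key : ∀ j : Fin d, HasFDerivAt (fun p : PD d => p.ofLp.1 j * p.ofLp.2 j ^ (k : ℕ))
      ((X j ^ (k : ℕ)) • coordA d j + (((k : ℕ) : ℝ) * A j * X j ^ ((k : ℕ) - 1)) • coordX d j) p₀ := by
    intro j
    have hA : HasFDerivAt (fun p : PD d => p.ofLp.1 j) (coordA d j) p₀ := (coordA d j).hasFDerivAt
    have hX : HasFDerivAt (fun p : PD d => p.ofLp.2 j) (coordX d j) p₀ := (coordX d j).hasFDerivAt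
    have hXp : HasFDerivAt (fun p : PD d => p.ofLp.2 j ^ (k : ℕ))
        ((((k : ℕ) : ℝ) * (X j) ^ ((k : ℕ) - 1)) • coordX d j) p₀ := by
      have := (hasDerivAt_pow (k : ℕ) (X j)).comp_hasFDerivAt p₀ (by exact hX)
      exact this
    have := hA.mul hXp
    refine this.congr_fderiv ?_
    ext v
    simp only [ContinuousLinearMap.add_apply, ContinuousLinearMap.smul_apply, coordA_apply,
      coordX_apply, smul_eq_mul]
    have h1 : p₀.ofLp.1 j = A j := rfl
    have h2 : p₀.ofLp.2 j = X j := rfl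
    rw [h1, h2]
    ring
  have := HasFDerivAt.sum (fun j (_ : j ∈ Finset.univ) => key j)
  convert this using 1
  · funext p
    rw [Finset.sum_apply]
  · rfl

lemma sum_eval_zero (A Y : EuclideanSpace ℝ (Fin d)) (v : PD d) (N : ℕ)
    (h : ∀ k : ℕ, k < N → ∑ j, (v.ofLp.1 j * Y j ^ k + (k : ℝ) * A j * Y j ^ (k - 1) * v.ofLp.2 j) = 0)
    (P : ℝ[X]) (hP : P.natDegree < N) :
    ∑ j, (v.ofLp.1 j * P.eval (Y j) + A j * v.ofLp.2 j * P.derivative.eval (Y j)) = 0 := by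
  have hev : ∀ x : ℝ, P.eval x = ∑ i ∈ range N, P.coeff i * x ^ i :=
    fun x => eval_eq_sum_range' hP x
  have hder : ∀ x : ℝ, P.derivative.eval x = ∑ i ∈ range N, P.coeff i * (i : ℝ) * x ^ (i - 1) := by
    intro x
    conv_lhs => rw [P.as_sum_range' N hP]
    rw [derivative_sum, eval_finset_sum]
    refine Finset.sum_congr rfl fun i _ => ?_
    rw [derivative_monomial, eval_monomial]
  simp_rw [hev, hder]
  have : ∀ j : Fin d, v.ofLp.1 j * ∑ i ∈ range N, P.coeff i * Y j ^ i +
      A j * v.ofLp.2 j * ∑ i ∈ range N, P.coeff i * (i : ℝ) * Y j ^ (i - 1) =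
      ∑ i ∈ range N, P.coeff i * (v.ofLp.1 j * Y j ^ i + (i : ℝ) * A j * Y j ^ (i - 1) * v.ofLp.2 j) := by
    intro j
    rw [Finset.mul_sum, Finset.mul_sum, ← Finset.sum_add_distrib]
    exact Finset.sum_congr rfl fun i _ => by ring
  simp_rw [this]
  rw [Finset.sum_comm]
  refine Finset.sum_eq_zero fun i hi => ?_
  rw [← Finset.mul_sum, h i (Finset.mem_range.1 hi), mul_zero]

def nodePoly (Y : EuclideanSpace ℝ (Fin d)) (j : Fin d) : ℝ[X] :=
  ∏ i ∈ Finset.univ.erase j, (Polynomial.X - C (Y i))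

lemma natDegree_nodePoly_le (Y : EuclideanSpace ℝ (Fin d)) (j : Fin d) :
    (nodePoly Y j).natDegree ≤ d - 1 := by
  refine le_trans (natDegree_prod_le _ _) ?_
  have h1 : ∀ i ∈ Finset.univ.erase j, (Polynomial.X - C (Y i)).natDegree ≤ 1 :=
    fun i _ => (natDegree_X_sub_C (Y i)).le
  refine le_trans (Finset.sum_le_sum h1) ?_
  rw [Finset.sum_const, smul_eq_mul, mul_one, Finset.card_erase_of_mem (Finset.mem_univ _),
    Finset.card_univ, Fintype.card_fin]

lemma eval_nodePoly_self_ne (Y : EuclideanSpace ℝ (Fin d))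
    (hsep : ∀ i i' : Fin d, i ≠ i' → Y i ≠ Y i') (j : Fin d) :
    (nodePoly Y j).eval (Y j) ≠ 0 := by
  rw [nodePoly, eval_prod]
  refine Finset.prod_ne_zero_iff.2 fun i hi => ?_
  simp only [eval_sub, eval_X, eval_C, sub_ne_zero]
  exact hsep j i fun h => (Finset.mem_erase.1 hi).1 (by aesop)

lemma eval_nodePoly_other (Y : EuclideanSpace ℝ (Fin d)) {i j : Fin d} (hij : i ≠ j) :
    (nodePoly Y j).eval (Y i) = 0 := by
  rw [nodePoly, eval_prod]
  exact Finset.prod_eq_zero (Finset.mem_erase.2 ⟨hij, Finset.mem_univ _⟩) (by simp)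

lemma eq_zero_of_coords (v : PD d) (h1 : ∀ j, v.ofLp.1 j = 0) (h2 : ∀ j, v.ofLp.2 j = 0) : v = 0 := by
  apply (WithLp.equiv 2 (EuclideanSpace ℝ (Fin d) × EuclideanSpace ℝ (Fin d))).injective
  ext j
  · exact h1 j
  · exact h2 j

lemma pronyJ_ker (hd : 1 ≤ d) (A Y : EuclideanSpace ℝ (Fin d))
    (hsep : ∀ i i' : Fin d, i ≠ i' → Y i ≠ Y i') (hA : ∀ j, A j ≠ 0) (v : PD d)
    (hv : ∀ k : ℕ, k < 2 * d →
      ∑ j, (v.ofLp.1 j * Y j ^ k + (k : ℝ) * A j * Y j ^ (k - 1) * v.ofLp.2 j) = 0) :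
    v = 0 := by
  have hQdeg : ∀ j : Fin d, (nodePoly Y j).natDegree ≤ d - 1 := natDegree_nodePoly_le Y
  -- step 1 : v.ofLp.2 = 0
  have h2 : ∀ j, v.ofLp.2 j = 0 := by
    intro j
    set Q := nodePoly Y j with hQ
    set P := Q ^ 2 * (Polynomial.X - C (Y j)) with hPdef
    have hdeg : P.natDegree < 2 * d := by
      have : P.natDegree ≤ (Q ^ 2).natDegree + (Polynomial.X - C (Y j)).natDegree :=
        natDegree_mul_le
      have h2' : (Q ^ 2).natDegree ≤ 2 * (d - 1) := by
        refine le_trans (natDegree_pow_le) ?_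
        exact Nat.mul_le_mul_left 2 (hQdeg j)
      have h3' : (Polynomial.X - C (Y j)).natDegree = 1 := natDegree_X_sub_C _
      omega
    have hS := sum_eval_zero A Y v (2 * d) hv P hdeg
    have hPeval : ∀ i : Fin d, P.eval (Y i) = 0 := by
      intro i
      by_cases hij : i = j
      · subst hij; simp [hPdef]
      · simp [hPdef, hQ, eval_nodePoly_other Y hij]
    have hPder : ∀ i : Fin d, i ≠ j → P.derivative.eval (Y i) = 0 := by
      intro i hij
      simp [hPdef, hQ, derivative_mul, derivative_pow, eval_nodePoly_other Y hij]
    have hPderj : P.derivative.eval (Y j) = (Q.eval (Y j)) ^ 2 := by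
      simp [hPdef, derivative_mul, derivative_pow]
    simp_rw [hPeval, mul_zero, zero_add] at hS
    rw [Finset.sum_eq_single j (fun i _ hij => by rw [hPder i hij, mul_zero])
      (fun h => absurd (Finset.mem_univ j) h)] at hS
    rw [hPderj] at hS
    have hQne := eval_nodePoly_self_ne Y hsep j
    have := mul_ne_zero (hA j) (pow_ne_zero 2 hQne)
    rcases mul_eq_zero.1 hS with h | h
    · rcases mul_eq_zero.1 h with h' | h'
      · exact absurd h' (hA j)
      · exact h'
    · exact absurd h (pow_ne_zero 2 hQne)
  -- step 2 : v.ofLp.1 = 0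
  have h1 : ∀ j, v.ofLp.1 j = 0 := by
    intro j
    set Q := nodePoly Y j with hQ
    set P := Q ^ 2 with hPdef
    have hdeg : P.natDegree < 2 * d := by
      have h2' : P.natDegree ≤ 2 * (d - 1) := by
        refine le_trans (natDegree_pow_le) ?_
        exact Nat.mul_le_mul_left 2 (hQdeg j)
      omega
    have hS := sum_eval_zero A Y v (2 * d) hv P hdeg
    simp_rw [h2, mul_zero, zero_mul, add_zero] at hS
    have hPeval : ∀ i : Fin d, i ≠ j → P.eval (Y i) = 0 := by
      intro i hij
      simp [hPdef, hQ, eval_nodePoly_other Y hij]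
    rw [Finset.sum_eq_single j (fun i _ hij => by rw [hPeval i hij, mul_zero])
      (fun h => absurd (Finset.mem_univ j) h)] at hS
    have hQne := eval_nodePoly_self_ne Y hsep j
    have hPj : P.eval (Y j) ≠ 0 := by
      simpa [hPdef] using pow_ne_zero 2 hQne
    rcases mul_eq_zero.1 hS with h | h
    · exact h
    · exact absurd h hPj
  exact eq_zero_of_coords v h1 h2

lemma pronyJ_axis (hd : 1 ≤ d) (A Y : EuclideanSpace ℝ (Fin d))
    (hsep : ∀ i i' : Fin d, i ≠ i' → Y i ≠ Y i') (v : PD d)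
    (hv2 : ∀ j, v.ofLp.2 j = 0)
    (hv : ∀ k : ℕ, k < 2 * d - 1 → ∑ j, v.ofLp.1 j * Y j ^ k = 0) :
    v = 0 := by
  have hv' : ∀ k : ℕ, k < 2 * d - 1 →
      ∑ j, (v.ofLp.1 j * Y j ^ k + (k : ℝ) * A j * Y j ^ (k - 1) * v.ofLp.2 j) = 0 := by
    intro k hk
    simp_rw [hv2, mul_zero, add_zero]
    exact hv k hk
  have h1 : ∀ j, v.ofLp.1 j = 0 := by
    intro j
    have hdeg : (nodePoly Y j).natDegree < 2 * d - 1 := by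
      have := natDegree_nodePoly_le Y j
      omega
    have hS := sum_eval_zero A Y v (2 * d - 1) hv' (nodePoly Y j) hdeg
    simp_rw [hv2, mul_zero, zero_mul, add_zero] at hS
    rw [Finset.sum_eq_single j (fun i _ hij => by rw [eval_nodePoly_other Y hij, mul_zero])
      (fun h => absurd (Finset.mem_univ j) h)] at hS
    rcases mul_eq_zero.1 hS with h | h
    · exact h
    · exact absurd h (eval_nodePoly_self_ne Y hsep j)
  exact eq_zero_of_coords v h1 hv2

lemma pronyJ_inj (hd : 1 ≤ d) (A Y : EuclideanSpace ℝ (Fin d))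
    (hsep : ∀ i i' : Fin d, i ≠ i' → Y i ≠ Y i') (hA : ∀ j, A j ≠ 0) :
    Function.Injective ⇑(pronyJ d A Y) := by
  intro v w hvw
  have h0 : pronyJ d A Y (v - w) = 0 := by rw [map_sub, hvw, sub_self]
  have hz : v - w = 0 := by
    apply pronyJ_ker hd A Y hsep hA
    intro k hk
    have hc : pronyJ d A Y (v - w) (⟨k, hk⟩ : Fin (2 * d)) = 0 := by rw [h0]; rfl
    rw [pronyJ_apply] at hc
    exact hc
  exact sub_eq_zero.mp hz

lemma finrank_PD : Module.finrank ℝ (PD d) = 2 * d := by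
  rw [(WithLp.linearEquiv 2 ℝ (EuclideanSpace ℝ (Fin d) × EuclideanSpace ℝ (Fin d))).finrank_eq,
    Module.finrank_prod, finrank_euclideanSpace_fin]
  ring

lemma finrank_PF : Module.finrank ℝ (PF d) = 2 * d := finrank_euclideanSpace_fin

lemma pronyJ_bij (hd : 1 ≤ d) (A Y : EuclideanSpace ℝ (Fin d))
    (hsep : ∀ i i' : Fin d, i ≠ i' → Y i ≠ Y i') (hA : ∀ j, A j ≠ 0) :
    Function.Bijective ⇑(pronyJ d A Y) := by
  have hinj := pronyJ_inj hd A Y hsep hA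
  refine ⟨hinj, ?_⟩
  have := (LinearMap.injective_iff_surjective_of_finrank_eq_finrank
    (f := (pronyJ d A Y : PD d →ₗ[ℝ] PF d)) (by rw [finrank_PD, finrank_PF])).mp hinj
  exact this

def Kset (m M ρ : ℝ) (d : ℕ) : Set (PD d) :=
  {p | (∀ j, p.ofLp.2 j ∈ Set.Icc (-(1 / 2) : ℝ) (1 / 2)) ∧
       (∀ i j : Fin d, i ≠ j → ρ ≤ |p.ofLp.2 i - p.ofLp.2 j|) ∧
       (∀ j, m ≤ |p.ofLp.1 j| ∧ |p.ofLp.1 j| ≤ M)}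

lemma continuous_coord1 (j : Fin d) : Continuous fun p : PD d => p.ofLp.1 j :=
  (coordA d j).continuous

lemma continuous_coord2 (j : Fin d) : Continuous fun p : PD d => p.ofLp.2 j :=
  (coordX d j).continuous

lemma isClosed_Kset (m M ρ : ℝ) : IsClosed (Kset m M ρ d) := by
  have h1 : IsClosed {p : PD d | ∀ j, p.ofLp.2 j ∈ Set.Icc (-(1 / 2) : ℝ) (1 / 2)} := by
    rw [Set.setOf_forall]
    exact isClosed_iInter fun j => isClosed_Icc.preimage (continuous_coord2 j)
  have h2 : IsClosed {p : PD d | ∀ i j : Fin d, i ≠ j → ρ ≤ |p.ofLp.2 i - p.ofLp.2 j|} := by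
    rw [Set.setOf_forall]
    refine isClosed_iInter fun i => ?_
    rw [Set.setOf_forall]
    refine isClosed_iInter fun j => ?_
    by_cases hij : i = j
    · subst hij
      have : {p : PD d | i ≠ i → ρ ≤ |p.ofLp.2 i - p.ofLp.2 i|} = Set.univ := by
        ext p; simp
      rw [this]
      exact isClosed_univ
    · have : {p : PD d | i ≠ j → ρ ≤ |p.ofLp.2 i - p.ofLp.2 j|} = {p : PD d | ρ ≤ |p.ofLp.2 i - p.ofLp.2 j|} := by
        ext p; simp [hij]
      rw [this]
      exact isClosed_Ici.preimage ((continuous_coord2 i).sub (continuous_coord2 j)).abs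
  have h3 : IsClosed {p : PD d | ∀ j, m ≤ |p.ofLp.1 j| ∧ |p.ofLp.1 j| ≤ M} := by
    rw [Set.setOf_forall]
    refine isClosed_iInter fun j => ?_
    have : {p : PD d | m ≤ |p.ofLp.1 j| ∧ |p.ofLp.1 j| ≤ M} =
        {p : PD d | m ≤ |p.ofLp.1 j|} ∩ {p : PD d | |p.ofLp.1 j| ≤ M} := rfl
    rw [this]
    exact (isClosed_Ici.preimage (continuous_coord1 j).abs).inter
      (isClosed_Iic.preimage (continuous_coord1 j).abs)
  have : Kset m M ρ d = _ ∩ (_ ∩ _) := rfl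
  exact h1.inter (h2.inter h3)

lemma isCompact_Kset (m M ρ : ℝ) (hM : 0 ≤ M) : IsCompact (Kset m M ρ d) := by
  refine (isCompact_closedBall (0 : PD d)
    (Real.sqrt (d * M ^ 2 + d * (1 / 2) ^ 2))).of_isClosed_subset (isClosed_Kset m M ρ) ?_
  intro p hp
  rw [Metric.mem_closedBall, dist_zero_right, ← Real.sqrt_sq (norm_nonneg p)]
  apply Real.sqrt_le_sqrt
  rw [WithLp.prod_norm_sq_eq_of_L2]
  have h1 : ‖p.ofLp.1‖ ^ 2 ≤ d * M ^ 2 := by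
    rw [PiLp.norm_sq_eq_of_L2]
    calc ∑ j, ‖p.ofLp.1 j‖ ^ 2 ≤ ∑ _j : Fin d, M ^ 2 := by
          refine Finset.sum_le_sum fun j _ => ?_
          rw [Real.norm_eq_abs]
          exact pow_le_pow_left₀ (abs_nonneg _) (hp.2.2 j).2 2
      _ = d * M ^ 2 := by simp [Finset.sum_const, Finset.card_univ]
  have h2 : ‖p.ofLp.2‖ ^ 2 ≤ d * (1 / 2) ^ 2 := by
    rw [PiLp.norm_sq_eq_of_L2]
    calc ∑ j, ‖p.ofLp.2 j‖ ^ 2 ≤ ∑ _j : Fin d, (1 / 2 : ℝ) ^ 2 := by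
          refine Finset.sum_le_sum fun j _ => ?_
          rw [Real.norm_eq_abs]
          refine pow_le_pow_left₀ (abs_nonneg _) ?_ 2
          have := hp.1 j
          rw [Set.mem_Icc] at this
          exact abs_le.mpr ⟨this.1, this.2⟩
      _ = d * (1 / 2) ^ 2 := by simp [Finset.sum_const, Finset.card_univ]
  exact add_le_add h1 h2

lemma continuous_pronyEval :
    Continuous (fun q : PD d × PD d => pronyJ d q.1.ofLp.1 q.1.ofLp.2 q.2) := by
  have hA1 : ∀ j : Fin d, Continuous fun q : PD d × PD d => q.1.ofLp.1 j :=
    fun j => (continuous_coord1 j).comp continuous_fst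
  have hX1 : ∀ j : Fin d, Continuous fun q : PD d × PD d => q.1.ofLp.2 j :=
    fun j => (continuous_coord2 j).comp continuous_fst
  have hA2 : ∀ j : Fin d, Continuous fun q : PD d × PD d => q.2.ofLp.1 j :=
    fun j => (continuous_coord1 j).comp continuous_snd
  have hX2 : ∀ j : Fin d, Continuous fun q : PD d × PD d => q.2.ofLp.2 j :=
    fun j => (continuous_coord2 j).comp continuous_snd
  have hrw : (fun q : PD d × PD d => pronyJ d q.1.ofLp.1 q.1.ofLp.2 q.2) =
      ⇑(PiLp.continuousLinearEquiv 2 ℝ (fun _ : Fin (2 * d) => ℝ)).symm ∘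
        (fun q (k : Fin (2 * d)) => ∑ j, (q.2.ofLp.1 j * q.1.ofLp.2 j ^ (k : ℕ) +
          ((k : ℕ) : ℝ) * q.1.ofLp.1 j * q.1.ofLp.2 j ^ ((k : ℕ) - 1) * q.2.ofLp.2 j)) := by
    funext q
    apply (PiLp.continuousLinearEquiv 2 ℝ (fun _ : Fin (2 * d) => ℝ)).injective
    funext k
    exact pronyJ_apply q.1.ofLp.1 q.1.ofLp.2 q.2 k
  rw [hrw]
  refine (ContinuousLinearEquiv.continuous _).comp (continuous_pi fun k => ?_)
  refine continuous_finset_sum _ fun j _ => ?_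
  exact ((hA2 j).mul ((hX1 j).pow _)).add
    (((continuous_const.mul (hA1 j)).mul ((hX1 j).pow _)).mul (hX2 j))

set_option maxHeartbeats 1000000 in
/-- for every `0 < m ≤ M`, `d ≥ 1`, `ρ > 0` there are positive
constants `C₅, C₆, C₇` depending only on `m, M, d, ρ` such that at every point
`(A⁰, X⁰)` with nodes in `[−1/2, 1/2]` pairwise `ρ`-separated and amplitudes in
`[m, M]` in absolute value: the Jacobian `JPM = D PM(A⁰,X⁰)` is invertible,
`‖JPM⁻¹‖ ≤ C₅`, `‖JPM⁻¹(μ)‖ ≥ C₆‖μ‖` for every `μ`, and for every `μ` on the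
last coordinate axis the projection onto the node coordinates satisfies
`‖P_X(JPM⁻¹(μ))‖ ≥ C₇‖μ‖`. -/
theorem prony_jacobian_bounds (m M ρ : ℝ) (d : ℕ)
    (hm : 0 < m) (hmM : m ≤ M) (hd : 1 ≤ d) (hρ : 0 < ρ) :
    ∃ C₅ > (0 : ℝ), ∃ C₆ > (0 : ℝ), ∃ C₇ > (0 : ℝ),
      ∀ A0 X0 : EuclideanSpace ℝ (Fin d),
        (∀ j, X0 j ∈ Set.Icc (-(1 / 2) : ℝ) (1 / 2)) →
        (∀ i j : Fin d, i ≠ j → ρ ≤ |X0 i - X0 j|) →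
        (∀ j, m ≤ |A0 j| ∧ |A0 j| ≤ M) →
        ∃ J : WithLp 2 (EuclideanSpace ℝ (Fin d) × EuclideanSpace ℝ (Fin d)) ≃L[ℝ]
            EuclideanSpace ℝ (Fin (2 * d)),
          (J : WithLp 2 (EuclideanSpace ℝ (Fin d) × EuclideanSpace ℝ (Fin d)) →L[ℝ]
              EuclideanSpace ℝ (Fin (2 * d))) =
            fderiv ℝ (Prony d) ((WithLp.equiv 2 _).symm (A0, X0)) ∧
          ‖(J.symm : EuclideanSpace ℝ (Fin (2 * d)) →L[ℝ]
              WithLp 2 (EuclideanSpace ℝ (Fin d) × EuclideanSpace ℝ (Fin d)))‖ ≤ C₅ ∧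
          (∀ μ : EuclideanSpace ℝ (Fin (2 * d)), C₆ * ‖μ‖ ≤ ‖J.symm μ‖) ∧
          (∀ μ : EuclideanSpace ℝ (Fin (2 * d)),
            (∀ k : Fin (2 * d), (k : ℕ) ≠ 2 * d - 1 → μ k = 0) →
            C₇ * ‖μ‖ ≤ ‖(WithLp.equiv 2 _ (J.symm μ)).2‖) := by
  classical
  have hM0 : (0 : ℝ) ≤ M := le_trans hm.le hmM
  set T : Set (PD d × PD d) := (Kset m M ρ d) ×ˢ (Metric.sphere (0 : PD d) 1) with hT
  have hKc : IsCompact (Kset m M ρ d) := isCompact_Kset m M ρ hM0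
  have hTc : IsCompact T := hKc.prod (isCompact_sphere 0 1)
  have hfc : Continuous fun q : PD d × PD d => ‖pronyJ d q.1.ofLp.1 q.1.ofLp.2 q.2‖ :=
    continuous_pronyEval.norm
  have hsepK : ∀ p ∈ Kset m M ρ d, ∀ i i' : Fin d, i ≠ i' → p.ofLp.2 i ≠ p.ofLp.2 i' := by
    intro p hp i i' h heq
    have := hp.2.1 i i' h
    rw [heq, sub_self, abs_zero] at this
    linarith
  have hampK : ∀ p ∈ Kset m M ρ d, ∀ j, p.ofLp.1 j ≠ 0 := by
    intro p hp j h
    have := (hp.2.2 j).1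
    rw [h, abs_zero] at this
    linarith
  have hinjK : ∀ p ∈ Kset m M ρ d, Function.Injective ⇑(pronyJ d p.ofLp.1 p.ofLp.2) :=
    fun p hp => pronyJ_inj hd p.ofLp.1 p.ofLp.2 (hsepK p hp) (hampK p hp)
  have hfpos : ∀ q ∈ T, 0 < ‖pronyJ d q.1.ofLp.1 q.1.ofLp.2 q.2‖ := by
    intro q hq
    rw [hT, Set.mem_prod] at hq
    have hq2 : ‖q.2‖ = 1 := mem_sphere_zero_iff_norm.mp hq.2
    have hne : q.2 ≠ 0 := fun h => by simp [h] at hq2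
    refine norm_pos_iff.mpr fun h => hne (hinjK q.1 hq.1 ?_)
    rw [h, map_zero]
  obtain ⟨c, hc0, hcT⟩ : ∃ c > (0 : ℝ), ∀ q ∈ T, c ≤ ‖pronyJ d q.1.ofLp.1 q.1.ofLp.2 q.2‖ := by
    rcases T.eq_empty_or_nonempty with h | h
    · exact ⟨1, one_pos, fun q hq => absurd hq (by simp [h])⟩
    · obtain ⟨q₀, hq₀, hmin⟩ := hTc.exists_isMinOn h hfc.continuousOn
      exact ⟨_, hfpos q₀ hq₀, fun q hq => hmin hq⟩
  obtain ⟨Cm, hCm1, hCmT⟩ : ∃ Cm ≥ (1 : ℝ), ∀ q ∈ T, ‖pronyJ d q.1.ofLp.1 q.1.ofLp.2 q.2‖ ≤ Cm := by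
    rcases T.eq_empty_or_nonempty with h | h
    · exact ⟨1, le_refl 1, fun q hq => absurd hq (by simp [h])⟩
    · obtain ⟨q₁, hq₁, hmax⟩ := hTc.exists_isMaxOn h hfc.continuousOn
      exact ⟨max (‖pronyJ d q₁.1.ofLp.1 q₁.1.ofLp.2 q₁.2‖) 1, le_max_right _ _,
        fun q hq => le_trans (hmax hq) (le_max_left _ _)⟩
  have hCm0 : (0 : ℝ) < Cm := lt_of_lt_of_le one_pos hCm1
  set K' : Set (PD d × PD d) := T ∩
    {q | ∀ k : Fin (2 * d), (k : ℕ) ≠ 2 * d - 1 → pronyJ d q.1.ofLp.1 q.1.ofLp.2 q.2 k = 0} with hK'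
  have hK'c : IsCompact K' := by
    refine hTc.inter_right ?_
    rw [Set.setOf_forall]
    refine isClosed_iInter fun k => ?_
    by_cases hk : (k : ℕ) = 2 * d - 1
    · have : {q : PD d × PD d | (k : ℕ) ≠ 2 * d - 1 → pronyJ d q.1.ofLp.1 q.1.ofLp.2 q.2 k = 0} =
          Set.univ := by ext q; simp [hk]
      rw [this]; exact isClosed_univ
    · have : {q : PD d × PD d | (k : ℕ) ≠ 2 * d - 1 → pronyJ d q.1.ofLp.1 q.1.ofLp.2 q.2 k = 0} =
          {q : PD d × PD d | pronyJ d q.1.ofLp.1 q.1.ofLp.2 q.2 k = 0} := by ext q; simp [hk]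
      rw [this]
      exact isClosed_eq ((EuclideanSpace.proj k).continuous.comp continuous_pronyEval)
        continuous_const
  have haxpos : ∀ q ∈ K', q.2.ofLp.2 ≠ 0 ∧ pronyJ d q.1.ofLp.1 q.1.ofLp.2 q.2 ≠ 0 := by
    intro q hq
    obtain ⟨hqT, hax⟩ := hq
    rw [hT, Set.mem_prod] at hqT
    have hq2 : ‖q.2‖ = 1 := mem_sphere_zero_iff_norm.mp hqT.2
    have hne : q.2 ≠ 0 := fun h => by simp [h] at hq2
    have hΦ : pronyJ d q.1.ofLp.1 q.1.ofLp.2 q.2 ≠ 0 := fun h => hne (hinjK q.1 hqT.1 (by rw [h, map_zero]))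
    refine ⟨fun h2 => ?_, hΦ⟩
    have h2j : ∀ j, q.2.ofLp.2 j = 0 := fun j => by rw [h2]; rfl
    apply hne
    apply pronyJ_axis hd q.1.ofLp.1 q.1.ofLp.2 (hsepK q.1 hqT.1) q.2 h2j
    intro k hk
    have hklt : k < 2 * d := by omega
    have hkne : ((⟨k, hklt⟩ : Fin (2 * d)) : ℕ) ≠ 2 * d - 1 := by simpa using (by omega : k ≠ 2 * d - 1)
    have hco := hax ⟨k, hklt⟩ hkne
    rw [pronyJ_apply] at hco
    simp only [h2j, mul_zero, add_zero] at hco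
    exact hco
  obtain ⟨c₇, hc₇0, hc₇K⟩ : ∃ c₇ > (0 : ℝ),
      ∀ q ∈ K', c₇ * ‖pronyJ d q.1.ofLp.1 q.1.ofLp.2 q.2‖ ≤ ‖q.2.ofLp.2‖ := by
    rcases K'.eq_empty_or_nonempty with h | h
    · exact ⟨1, one_pos, fun q hq => absurd hq (by simp [h])⟩
    · have hc22 : Continuous fun q : PD d × PD d => q.2.ofLp.2 := by
        exact continuous_snd.comp
          ((WithLp.prodContinuousLinearEquiv 2 ℝ (EuclideanSpace ℝ (Fin d))
            (EuclideanSpace ℝ (Fin d))).continuous.comp continuous_snd)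
      have hgc : ContinuousOn (fun q : PD d × PD d =>
          ‖q.2.ofLp.2‖ / ‖pronyJ d q.1.ofLp.1 q.1.ofLp.2 q.2‖) K' := by
        refine ContinuousOn.div hc22.norm.continuousOn hfc.continuousOn ?_
        exact fun q hq => (norm_pos_iff.mpr (haxpos q hq).2).ne'
      obtain ⟨q₂, hq₂, hmin⟩ := hK'c.exists_isMinOn h hgc
      refine ⟨_, div_pos (norm_pos_iff.mpr (haxpos q₂ hq₂).1)
        (norm_pos_iff.mpr (haxpos q₂ hq₂).2), ?_⟩
      intro q hq
      have hle := hmin hq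
      have hfq : 0 < ‖pronyJ d q.1.ofLp.1 q.1.ofLp.2 q.2‖ := norm_pos_iff.mpr (haxpos q hq).2
      calc (‖q₂.2.ofLp.2‖ / ‖pronyJ d q₂.1.ofLp.1 q₂.1.ofLp.2 q₂.2‖) * ‖pronyJ d q.1.ofLp.1 q.1.ofLp.2 q.2‖
          ≤ (‖q.2.ofLp.2‖ / ‖pronyJ d q.1.ofLp.1 q.1.ofLp.2 q.2‖) * ‖pronyJ d q.1.ofLp.1 q.1.ofLp.2 q.2‖ :=
            mul_le_mul_of_nonneg_right hle hfq.le
        _ = ‖q.2.ofLp.2‖ := div_mul_cancel₀ _ hfq.ne'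
  refine ⟨c⁻¹, by positivity, Cm⁻¹, by positivity, c₇, hc₇0, ?_⟩
  intro A0 X0 hX hsepρ hAmp
  set p₀ : PD d := (WithLp.equiv 2 _).symm (A0, X0) with hp₀
  have hp₀K : p₀ ∈ Kset m M ρ d := ⟨hX, hsepρ, hAmp⟩
  have hsep' : ∀ i i' : Fin d, i ≠ i' → X0 i ≠ X0 i' := hsepK p₀ hp₀K
  have hamp' : ∀ j, A0 j ≠ 0 := hampK p₀ hp₀K
  have hbij : Function.Bijective ⇑((pronyJ d A0 X0 : PD d →L[ℝ] PF d) : PD d →ₗ[ℝ] PF d) :=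
    pronyJ_bij hd A0 X0 hsep' hamp'
  haveI : ContinuousSMul ℝ (PD d) := IsBoundedSMul.continuousSMul
  set J : PD d ≃L[ℝ] PF d :=
    (LinearEquiv.ofBijective ((pronyJ d A0 X0 : PD d →L[ℝ] PF d) : PD d →ₗ[ℝ] PF d)
      hbij).toContinuousLinearEquiv with hJdef
  have hJcoe : (J : PD d →L[ℝ] PF d) = pronyJ d A0 X0 := by ext v; rfl
  have hJv : ∀ v : PD d, J v = pronyJ d A0 X0 v := fun v => rfl
  have hJs : ∀ μ : PF d, pronyJ d A0 X0 (J.symm μ) = μ := fun μ => by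
    rw [← hJv]; exact J.apply_symm_apply μ
  have hlow : ∀ v : PD d, c * ‖v‖ ≤ ‖pronyJ d A0 X0 v‖ := by
    intro v
    by_cases hv : v = 0
    · simp [hv]
    · have hvn : 0 < ‖v‖ := norm_pos_iff.mpr hv
      have hu : (p₀, ‖v‖⁻¹ • v) ∈ T := by
        refine Set.mem_prod.mpr ⟨hp₀K, ?_⟩
        rw [mem_sphere_zero_iff_norm, norm_smul, norm_inv, norm_norm, inv_mul_cancel₀ hvn.ne']
      have hc' := hcT _ hu
      have heq : ‖pronyJ d (p₀, ‖v‖⁻¹ • v).1.ofLp.1 (p₀, ‖v‖⁻¹ • v).1.ofLp.2 (p₀, ‖v‖⁻¹ • v).2‖ =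
          ‖v‖⁻¹ * ‖pronyJ d A0 X0 v‖ := by
        show ‖pronyJ d A0 X0 (‖v‖⁻¹ • v)‖ = _
        rw [map_smul, norm_smul, norm_inv, norm_norm]
      rw [heq] at hc'
      calc c * ‖v‖ ≤ (‖v‖⁻¹ * ‖pronyJ d A0 X0 v‖) * ‖v‖ :=
            mul_le_mul_of_nonneg_right hc' hvn.le
        _ = ‖pronyJ d A0 X0 v‖ := by field_simp
  have hup : ∀ v : PD d, ‖pronyJ d A0 X0 v‖ ≤ Cm * ‖v‖ := by
    intro v
    by_cases hv : v = 0
    · simp [hv]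
    · have hvn : 0 < ‖v‖ := norm_pos_iff.mpr hv
      have hu : (p₀, ‖v‖⁻¹ • v) ∈ T := by
        refine Set.mem_prod.mpr ⟨hp₀K, ?_⟩
        rw [mem_sphere_zero_iff_norm, norm_smul, norm_inv, norm_norm, inv_mul_cancel₀ hvn.ne']
      have hc' := hCmT _ hu
      have heq : ‖pronyJ d (p₀, ‖v‖⁻¹ • v).1.ofLp.1 (p₀, ‖v‖⁻¹ • v).1.ofLp.2 (p₀, ‖v‖⁻¹ • v).2‖ =
          ‖v‖⁻¹ * ‖pronyJ d A0 X0 v‖ := by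
        show ‖pronyJ d A0 X0 (‖v‖⁻¹ • v)‖ = _
        rw [map_smul, norm_smul, norm_inv, norm_norm]
      rw [heq] at hc'
      have := mul_le_mul_of_nonneg_right hc' hvn.le
      rw [inv_mul_eq_div, div_mul_cancel₀ _ hvn.ne'] at this
      linarith [mul_le_mul_of_nonneg_right (le_refl Cm) hvn.le]
  refine ⟨J, ?_, ?_, ?_, ?_⟩
  · rw [hJcoe]
    exact ((hasFDerivAt_prony A0 X0).fderiv).symm
  · refine ContinuousLinearMap.opNorm_le_bound _ (by positivity) fun μ => ?_
    have h := hlow (J.symm μ)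
    rw [hJs] at h
    rw [inv_mul_eq_div, le_div_iff₀ hc0]
    have hcoe : ‖(J.symm : PF d →L[ℝ] PD d) μ‖ = ‖J.symm μ‖ := rfl
    rw [hcoe, mul_comm]
    exact h
  · intro μ
    have h := hup (J.symm μ)
    rw [hJs] at h
    rw [inv_mul_eq_div, div_le_iff₀ hCm0]
    linarith
  · intro μ hμax
    by_cases hμ : μ = 0
    · simp [hμ]
    · set v : PD d := J.symm μ with hvdef
      have hv : v ≠ 0 := fun h => hμ (by
        have := congrArg (⇑J) h
        rw [J.apply_symm_apply, map_zero] at this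
        exact this)
      have hvn : 0 < ‖v‖ := norm_pos_iff.mpr hv
      have hqK' : (p₀, ‖v‖⁻¹ • v) ∈ K' := by
        refine ⟨Set.mem_prod.mpr ⟨hp₀K, ?_⟩, ?_⟩
        · rw [mem_sphere_zero_iff_norm, norm_smul, norm_inv, norm_norm, inv_mul_cancel₀ hvn.ne']
        · intro k hk
          show pronyJ d A0 X0 (‖v‖⁻¹ • v) k = 0
          rw [map_smul, hvdef, hJs]
          show ‖v‖⁻¹ * μ k = 0
          rw [hμax k hk, mul_zero]
      have h7 := hc₇K _ hqK'
      have heq : ‖pronyJ d (p₀, ‖v‖⁻¹ • v).1.ofLp.1 (p₀, ‖v‖⁻¹ • v).1.ofLp.2 (p₀, ‖v‖⁻¹ • v).2‖ =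
          ‖v‖⁻¹ * ‖μ‖ := by
        show ‖pronyJ d A0 X0 (‖v‖⁻¹ • v)‖ = _
        rw [map_smul, hvdef, hJs, norm_smul, norm_inv, norm_norm]
      have heq2 : ‖(p₀, ‖v‖⁻¹ • v).2.ofLp.2‖ = ‖v‖⁻¹ * ‖v.ofLp.2‖ := by
        show ‖‖v‖⁻¹ • v.ofLp.2‖ = _
        rw [norm_smul, norm_inv, norm_norm]
      rw [heq, heq2] at h7
      show c₇ * ‖μ‖ ≤ ‖v.ofLp.2‖
      have := mul_le_mul_of_nonneg_right h7 hvn.le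
      calc c₇ * ‖μ‖ = (c₇ * (‖v‖⁻¹ * ‖μ‖)) * ‖v‖ := by field_simp
        _ ≤ (‖v‖⁻¹ * ‖v.ofLp.2‖) * ‖v‖ := mul_le_mul_of_nonneg_right h7 hvn.le
        _ = ‖v.ofLp.2‖ := by field_simp
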